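/- Let A : Matrix (Fin 2) (Fin 2) ℝ be the diagonal matrix with diagonal entries 3/2 and 1/4, and for φ ∈ ℝ let B(φ) : Matrix (Fin 2) (Fin 2) ℝ be the matrix with first row (−3cos φ, −3sin φ) and second row (0, 0). Then for every real α > 6 and every φ ∈ ℝ, the block matrix Matrix.fromBlocks A (B φ) (B φ)ᵀ (α • (1 : Matrix (Fin 2) (Fin 2) ℝ)) is positive definite. -/

import Mathlib

open Matrix

/-- Section 8.1 of the paper: for the vertically rolling disk with `M = R = 1`, the
block matrix `ĝ = [[A, B(φ)], [B(φ)ᵀ, αI]]` with `A = diag(3/2, 1/4)` and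
`B(φ) = [[-3cos φ, -3 sin φ], [0, 0]]` is positive definite for every `α > 6`. -/
theorem rolling_disk_metric_posDef :
    ∀ α > (6 : ℝ), ∀ φ : ℝ,
      (Matrix.fromBlocks
        (Matrix.diagonal ![(3 : ℝ) / 2, 1 / 4])
        (!![-3 * Real.cos φ, -3 * Real.sin φ; 0, 0])
        (!![-3 * Real.cos φ, -3 * Real.sin φ; 0, 0])ᵀ
        (α • (1 : Matrix (Fin 2) (Fin 2) ℝ))).PosDef := by
  intro α hα φ
  rw [Matrix.posDef_iff_dotProduct_mulVec]
  constructor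
  · ext i j
    rcases i with i | i <;> rcases j with j | j <;>
      fin_cases i <;> fin_cases j <;>
      simp [Matrix.fromBlocks, conjTranspose, diagonal, Matrix.one_apply, Matrix.transpose_apply, Matrix.vecHead, Matrix.vecTail]
  · intro x hx
    have hc := Real.sin_sq_add_cos_sq φ
    set c := Real.cos φ with hcdef
    set s := Real.sin φ with hsdef
    set u0 := x (Sum.inl 0) with h0
    set u1 := x (Sum.inl 1) with h1
    set v0 := x (Sum.inr 0) with h2
    set v1 := x (Sum.inr 1) with h3
    have hq : dotProduct (star x)
        ((Matrix.fromBlocks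
          (Matrix.diagonal ![(3 : ℝ) / 2, 1 / 4])
          (!![-3 * c, -3 * s; 0, 0])
          (!![-3 * c, -3 * s; 0, 0])ᵀ
          (α • (1 : Matrix (Fin 2) (Fin 2) ℝ))) *ᵥ x)
        = (3/2) * u0^2 + (1/4) * u1^2 - 6*c*u0*v0 - 6*s*u0*v1 + α*(v0^2 + v1^2) := by
      simp [dotProduct, Matrix.mulVec, Fintype.sum_sum_type, Fin.sum_univ_two,
        Matrix.fromBlocks, Matrix.one_apply, Matrix.diagonal, Matrix.transpose_apply, Matrix.vecHead, Matrix.vecTail, ← h0, ← h1, ← h2, ← h3]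
      ring
    rw [hq]
    have hx' : u0 ≠ 0 ∨ u1 ≠ 0 ∨ v0 ≠ 0 ∨ v1 ≠ 0 := by
      by_contra h
      push_neg at h
      apply hx
      funext i
      rcases i with i | i <;> fin_cases i <;> tauto
    clear_value c s u0 u1 v0 v1
    clear hcdef hsdef h0 h1 h2 h3 hx hq
    have key : (c*v0 + s*v1)^2 ≤ v0^2 + v1^2 := by nlinarith [sq_nonneg (s*v0 - c*v1)]
    rcases eq_or_ne (v0^2 + v1^2) 0 with hv | hv
    · have hv0 : v0 = 0 := by nlinarith [sq_nonneg v0, sq_nonneg v1]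
      have hv1 : v1 = 0 := by nlinarith [sq_nonneg v0, sq_nonneg v1]
      rw [hv0, hv1]
      rcases hx' with h | h | h | h
      · nlinarith [sq_nonneg u1, sq_pos_of_ne_zero h]
      · nlinarith [sq_nonneg u0, sq_pos_of_ne_zero h]
      · exact absurd hv0 h
      · exact absurd hv1 h
    · have hvpos : 0 < v0^2 + v1^2 := lt_of_le_of_ne (by positivity) (Ne.symm hv)
      have h6 : 6*(v0^2+v1^2) < α*(v0^2+v1^2) := by
        have := mul_lt_mul_of_pos_right hα hvpos
        linarith
      nlinarith [sq_nonneg (u0 - 2*(c*v0 + s*v1)), sq_nonneg u1, key, h6]
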